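/- Let S = {z ∈ ℂ : Re z ≥ 0, 0 ≤ Im z ≤ 1} and let f : S → ℂ be continuous, bounded, holomorphic on the interior of S, real-valued on {z ∈ S : Im z = 0} and on {z ∈ S : Im z = 1}, and purely imaginary on {z ∈ S : Re z = 0}. Then f is identically 0. -/

import Mathlib

open Complex Set

lemma aux_le_zero {a c : ℝ} (hc : 0 ≤ c) (h : ∀ ε : ℝ, 0 < ε → a ≤ ε * c) : a ≤ 0 := by
  by_contra hn
  push_neg at hn
  have := h (a / (2 * (c + 1))) (by positivity)
  rw [div_mul_eq_mul_div, le_div_iff₀ (by positivity)] at this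
  nlinarith

lemma aux_norm (σ ε : ℝ) (w z : ℂ) :
    ‖Complex.exp ((σ : ℂ) * I * w - (ε : ℂ) * z)‖ = Real.exp (-(σ * w.im) - ε * z.re) := by
  rw [Complex.norm_exp]
  congr 1
  simp [Complex.sub_re, Complex.mul_re, Complex.mul_im]

/-- Let `S = {z : Re z ≥ 0, 0 ≤ Im z ≤ 1}` and let `f` be continuous and bounded on `S`,
holomorphic on the interior of `S`, real-valued on the horizontal boundary pieces
`Im z = 0` and `Im z = 1`, and purely imaginary on the vertical boundary `Re z = 0`.
Then `f` vanishes identically on `S`. -/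
theorem stmt6 (f : ℂ → ℂ) (C : ℝ)
    (S : Set ℂ) (hS : S = {z | 0 ≤ z.re ∧ 0 ≤ z.im ∧ z.im ≤ 1})
    (hcont : ContinuousOn f S)
    (hbdd : ∀ z ∈ S, ‖f z‖ ≤ C)
    (hholo : DifferentiableOn ℂ f {z | 0 < z.re ∧ 0 < z.im ∧ z.im < 1})
    (hreal0 : ∀ z ∈ S, z.im = 0 → (f z).im = 0)
    (hreal1 : ∀ z ∈ S, z.im = 1 → (f z).im = 0)
    (himag : ∀ z ∈ S, z.re = 0 → (f z).re = 0) :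
    ∀ z ∈ S, f z = 0 := by
  set T : Set ℂ := {z | 0 < z.re ∧ 0 < z.im ∧ z.im < 1} with hT
  have hTS : T ⊆ S := by
    rw [hS]; rintro z ⟨h1, h2, h3⟩; exact ⟨h1.le, h2.le, h3.le⟩
  -- the square of f
  set h : ℂ → ℂ := fun z => (f z) ^ 2 with hh
  -- boundary values of Im h
  have him0 : ∀ z ∈ S, (z.re = 0 ∨ z.im = 0 ∨ z.im = 1) → (h z).im = 0 := by
    intro z hz hcase
    have : (h z).im = 2 * (f z).re * (f z).im := by
      simp [hh, pow_two, Complex.mul_im]; ring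
    rcases hcase with hc | hc | hc
    · rw [this, himag z hz hc]; ring
    · rw [this, hreal0 z hz hc]; ring
    · rw [this, hreal1 z hz hc]; ring
  -- bound on |Im h|
  have habs : ∀ z ∈ S, |(h z).im| ≤ C ^ 2 := by
    intro z hz
    calc |(h z).im| ≤ ‖h z‖ := Complex.abs_im_le_norm _
      _ = ‖f z‖ ^ 2 := by rw [hh]; simp [map_pow]
      _ ≤ C ^ 2 := by
          have h0 : 0 ≤ ‖f z‖ := norm_nonneg _
          have := hbdd z hz
          nlinarith
  -- Main step: Im h = 0 on S, by maximum modulus on truncated rectangles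
  have himS : ∀ z ∈ S, (h z).im = 0 := by
    have key : ∀ z₀ ∈ S, ∀ σ : ℝ, |σ| = 1 → ∀ ε : ℝ, 0 < ε →
        -(σ * (h z₀).im) ≤ ε * z₀.re := by
      intro z₀ hz₀ σ hσ ε hε
      obtain ⟨hre₀, him₀, him₁⟩ : 0 ≤ z₀.re ∧ 0 ≤ z₀.im ∧ z₀.im ≤ 1 := by
        rwa [hS] at hz₀
      set R : ℝ := max z₀.re (C ^ 2 / ε) + 1 with hR
      have hRre : z₀.re < R := by
        have := le_max_left z₀.re (C ^ 2 / ε)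
        rw [hR]; linarith
      have hR0 : 0 < R := lt_of_le_of_lt hre₀ hRre
      have hRC : C ^ 2 < ε * R := by
        have h1 : C ^ 2 / ε ≤ max z₀.re (C ^ 2 / ε) := le_max_right _ _
        have h2 : C ^ 2 = ε * (C ^ 2 / ε) := by field_simp
        rw [h2, hR]; nlinarith [le_max_right z₀.re (C ^ 2 / ε)]
      set U : Set ℂ := Ioo (0:ℝ) R ×ℂ Ioo (0:ℝ) 1 with hU
      have hUT : U ⊆ T := by
        rintro z ⟨h1, h2⟩
        exact ⟨h1.1, h2.1, h2.2⟩
      have hclU : closure U = Icc (0:ℝ) R ×ℂ Icc (0:ℝ) 1 := by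
        rw [hU, Complex.closure_reProdIm, closure_Ioo hR0.ne, closure_Ioo zero_ne_one]
      have hclS : closure U ⊆ S := by
        rw [hclU, hS]
        rintro z ⟨h1, h2⟩
        exact ⟨h1.1, h2.1, h2.2⟩
      have hbU : Bornology.IsBounded U := by
        apply (Metric.isBounded_closedBall (x := (0:ℂ)) (r := R + 1)).subset
        rintro z ⟨h1, h2⟩
        simp only [Metric.mem_closedBall, dist_zero_right]
        calc ‖z‖ ≤ |z.re| + |z.im| := Complex.norm_le_abs_re_add_abs_im z
          _ ≤ R + 1 := by
              rw [abs_of_pos h1.1, abs_of_pos h2.1]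
              have := h1.2.le; have := h2.2.le; linarith
      set F : ℂ → ℂ := fun z => Complex.exp ((σ : ℂ) * I * h z - (ε : ℂ) * z) with hF
      have hFd : DiffContOnCl ℂ F U := by
        constructor
        · apply DifferentiableOn.cexp
          exact (((hholo.mono hUT).pow 2).const_mul _).sub
            ((differentiableOn_id).const_mul _)
        · apply ContinuousOn.cexp
          exact ((((hcont.mono hclS).pow 2).const_smul ((σ : ℂ) * I)).sub
            ((continuousOn_id).const_smul (ε : ℂ)))
      have hfront : ∀ w ∈ frontier U, ‖F w‖ ≤ 1 := by
        intro w hw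
        have hwS : w ∈ S := hclS (frontier_subset_closure hw)
        have hwS' : 0 ≤ w.re ∧ 0 ≤ w.im ∧ w.im ≤ 1 := by rwa [hS] at hwS
        rw [hU, Complex.frontier_reProdIm] at hw
        rw [hF, aux_norm σ ε (h w) w, Real.exp_le_one_iff]
        rcases hw with ⟨_, h2⟩ | ⟨h1, _⟩
        · -- im w ∈ frontier (Ioo 0 1) = {0, 1}
          rw [frontier_Ioo one_pos] at h2
          have : (h w).im = 0 := him0 w hwS (by
            rcases h2 with h2 | h2
            · exact Or.inr (Or.inl h2)
            · exact Or.inr (Or.inr h2))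
          rw [this]
          nlinarith [mul_nonneg hε.le hwS'.1]
        · -- re w ∈ frontier (Ioo 0 R) = {0, R}
          rw [frontier_Ioo hR0] at h1
          rcases h1 with h1 | h1
          · have : (h w).im = 0 := him0 w hwS (Or.inl h1)
            rw [this, h1]
            simp
          · have hb := habs w hwS
            have : -(σ * (h w).im) ≤ C ^ 2 := by
              calc -(σ * (h w).im) ≤ |σ * (h w).im| := neg_le_abs _
                _ = |σ| * |(h w).im| := abs_mul _ _
                _ = |(h w).im| := by rw [hσ, one_mul]
                _ ≤ C ^ 2 := hb
            rw [h1]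
            linarith
      have hz₀cl : z₀ ∈ closure U := by
        rw [hclU]
        exact ⟨⟨hre₀, hRre.le⟩, ⟨him₀, him₁⟩⟩
      have := Complex.norm_le_of_forall_mem_frontier_norm_le hbU hFd hfront hz₀cl
      rw [hF, aux_norm σ ε (h z₀) z₀, Real.exp_le_one_iff] at this
      linarith
    intro z hz
    have hre : 0 ≤ z.re := by rw [hS] at hz; exact hz.1
    have h1 : (h z).im ≤ 0 := by
      have := key z hz (-1) (by norm_num)
      apply aux_le_zero hre
      intro ε hε
      have := this ε hε
      linarith
    have h2 : -(h z).im ≤ 0 := by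
      apply aux_le_zero hre
      intro ε hε
      have := key z hz 1 (by norm_num) ε hε
      linarith
    linarith
  -- h is analytic on T and real-valued there, hence constant
  have hTopen : IsOpen T := by
    rw [hT]
    exact (isOpen_lt continuous_const Complex.continuous_re).inter
      ((isOpen_lt continuous_const Complex.continuous_im).inter
        (isOpen_lt Complex.continuous_im continuous_const))
  have hTconv : Convex ℝ T := by
    rw [hT]
    have : T = {z : ℂ | 0 < z.re} ∩ ({z : ℂ | 0 < z.im} ∩ {z : ℂ | z.im < 1}) := by
      ext z; simp [hT, and_assoc]
    rw [← hT, this]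
    exact (convex_halfSpace_re_gt 0).inter
      ((convex_halfSpace_im_gt 0).inter (convex_halfSpace_im_lt 1))
  have hana : AnalyticOnNhd ℂ h T := ((hholo.mono (le_refl T)).pow 2).analyticOnNhd hTopen
  rcases hana.is_constant_or_isOpen hTconv.isPreconnected with ⟨w, hw⟩ | hopen
  · -- constant case
    -- h = w on all of S by continuity, since S ⊆ closure T
    have hScl : S ⊆ closure T := by
      have hTeq : T = Ioi (0:ℝ) ×ℂ Ioo (0:ℝ) 1 := by
        ext z; simp [hT, Complex.mem_reProdIm, and_assoc]
      rw [hTeq, Complex.closure_reProdIm, closure_Ioi, closure_Ioo one_ne_zero.symm, hS]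
      rintro z ⟨h1, h2, h3⟩
      exact ⟨h1, h2, h3⟩
    have hall : ∀ z ∈ S, h z = w := by
      intro z hz
      have hne : (nhdsWithin z T).NeBot := mem_closure_iff_nhdsWithin_neBot.1 (hScl hz)
      have t1 : Filter.Tendsto h (nhdsWithin z T) (nhds (h z)) :=
        (((hcont z hz).pow 2).mono hTS)
      have t2 : Filter.Tendsto h (nhdsWithin z T) (nhds w) := by
        apply Filter.Tendsto.congr' _ (tendsto_const_nhds (x := w))
        filter_upwards [self_mem_nhdsWithin] with x hx
        exact (hw x hx).symm
      exact tendsto_nhds_unique t1 t2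
    have h0S : (0:ℂ) ∈ S := by rw [hS]; simp
    have hf0 : f 0 = 0 := by
      apply Complex.ext
      · exact himag 0 h0S (by simp)
      · exact hreal0 0 h0S (by simp)
    have hw0 : w = 0 := by
      have h00 := hall 0 h0S
      have hz0 : h 0 = 0 := by simp [hh, hf0]
      rw [hz0] at h00
      exact h00.symm
    intro z hz
    have hzw := hall z hz
    rw [hw0] at hzw
    have : f z ^ 2 = 0 := hzw
    exact pow_eq_zero_iff two_ne_zero |>.1 this
  · -- open case: impossible, image is contained in the real line
    exfalso
    have himg : IsOpen (h '' T) := hopen T le_rfl hTopen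
    have hz₁ : ((1 + I) / 2 : ℂ) ∈ T := by
      rw [hT]
      refine ⟨?_, ?_, ?_⟩ <;> simp [Complex.div_re, Complex.div_im] <;> norm_num
    have hpmem : h ((1 + I)/2) ∈ h '' T := mem_image_of_mem h hz₁
    obtain ⟨r, hr, hball⟩ := Metric.isOpen_iff.1 himg _ hpmem
    set p := h ((1 + I)/2) with hp
    have hq : p + (r/2) * I ∈ h '' T := by
      apply hball
      simp only [Metric.mem_ball, dist_eq_norm]
      have : p + (r/2) * I - p = (r/2 : ℂ) * I := by ring
      rw [this]
      have : ((r:ℂ)/2) * I = ((r/2 : ℝ) : ℂ) * I := by push_cast; ring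
      rw [this]
      simp only [norm_mul, Complex.norm_I, mul_one, Complex.norm_real, Real.norm_eq_abs]
      rw [abs_of_pos (by linarith)]
      linarith
    obtain ⟨x, hx, hxq⟩ := hq
    have h1 : (h x).im = 0 := himS x (hTS hx)
    have h2 : (p + (r/2) * I).im = p.im + r/2 := by simp
    have h3 : p.im = 0 := himS _ (hTS hz₁)
    rw [hxq, h2, h3] at h1
    linarith
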